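/- Let R be a nontrivial commutative ring with identity and let X₁, X₂, ... be a countably infinite set of indeterminates over R. Then the polynomial ring R[X₁, X₂, ...] in countably many variables is not a weakly Laskerian ring. -/

import Mathlib

/-- An `R`-module `M` is *weakly Laskerian* if every quotient of `M` has only finitely many
associated prime ideals. -/
def IsWeaklyLaskerian (R : Type*) [CommRing R] (M : Type*) [AddCommGroup M]
    [Module R M] : Prop :=
  ∀ N : Submodule R M, (associatedPrimes R (M ⧸ N)).Finite

/-- For any nontrivial commutative ring `R`, the polynomial ring `R[X₁, X₂, ...]` in
countably many indeterminates over `R` is not a weakly Laskerian ring. -/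
theorem mvPolynomial_not_weaklyLaskerian {R : Type*} [CommRing R] [Nontrivial R] :
    ¬ IsWeaklyLaskerian (MvPolynomial ℕ R) (MvPolynomial ℕ R) := by
  intro h
  obtain ⟨m, hm⟩ := Ideal.exists_maximal R
  haveI := hm
  -- ψ n : R[X₀, X₁, ...] →+* k[T], sending Xₙ ↦ T and all other variables to 0.
  let ψ : ℕ → (MvPolynomial ℕ R →+* Polynomial (R ⧸ m)) := fun n =>
    MvPolynomial.eval₂Hom ((Polynomial.C : (R ⧸ m) →+* Polynomial (R ⧸ m)).comp (Ideal.Quotient.mk m))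
      (fun j => if j = n then Polynomial.X else 0)
  have ψX : ∀ n j, ψ n (MvPolynomial.X j) = if j = n then Polynomial.X else 0 := by
    intro n j
    simp [ψ]
  let Φ : MvPolynomial ℕ R →+* (∀ _ : ℕ, Polynomial (R ⧸ m)) := Pi.ringHom ψ
  let N : Submodule (MvPolynomial ℕ R) (MvPolynomial ℕ R) := RingHom.ker Φ
  have key : ∀ n, RingHom.ker (ψ n) ∈
      associatedPrimes (MvPolynomial ℕ R) (MvPolynomial ℕ R ⧸ N) := by
    intro n
    refine ⟨RingHom.ker_isPrime (ψ n), Submodule.Quotient.mk (MvPolynomial.X n), ?_⟩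
    suffices hs : RingHom.ker (ψ n) = (⊥ : Submodule (MvPolynomial ℕ R) (MvPolynomial ℕ R ⧸ N)).colon {Submodule.Quotient.mk (MvPolynomial.X n)} by
      rw [← hs, (RingHom.ker_isPrime (ψ n)).radical]
    ext f
    rw [Submodule.mem_colon_singleton, Submodule.mem_bot, ← Submodule.Quotient.mk_smul,
      Submodule.Quotient.mk_eq_zero]
    constructor
    · intro hf
      have : Φ (f • MvPolynomial.X n) = 0 := by
        funext j
        simp only [Φ, Pi.ringHom, Pi.ringHom_apply, smul_eq_mul, map_mul, Pi.mul_apply, Pi.zero_apply]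
        rcases eq_or_ne j n with rfl | hj
        · rw [RingHom.mem_ker] at hf
          rw [hf, zero_mul]
        · simp [ψX, Ne.symm hj]
      exact this
    · intro hf
      have : ψ n (f • MvPolynomial.X n) = 0 := congrFun hf n
      rw [smul_eq_mul, map_mul, ψX, if_pos rfl] at this
      rcases mul_eq_zero.mp this with h0 | h0
      · exact h0
      · exact absurd h0 Polynomial.X_ne_zero
  have inj : Function.Injective (fun n => RingHom.ker (ψ n)) := by
    intro a b hab
    by_contra hne
    have hab' : RingHom.ker (ψ a) = RingHom.ker (ψ b) := hab
    have h1 : MvPolynomial.X b ∈ RingHom.ker (ψ a) := by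
      rw [RingHom.mem_ker, ψX, if_neg (Ne.symm hne)]
    rw [hab', RingHom.mem_ker, ψX, if_pos rfl] at h1
    exact Polynomial.X_ne_zero h1
  exact (h N).not_infinite (Set.infinite_of_injective_forall_mem inj key)
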